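/- Let a > b > 0 and fix i ∈ ℕ. For z_1,…,z_i ≥ 0 with √n·z_ℓ ∈ ℕ_0, define L_n = Σ_{ℓ=1}^i √n·z_ℓ · Σ_{j=ℓ}^n log(1 − a·n^{−3/2} + b·n^{−1/2}·1_{\{j=1\}}). Then for any fixed nonnegative reals z_1,…,z_i (approximated by lattice values z_ℓ^{(n)} → z_ℓ with √n·z_ℓ^{(n)} ∈ ℕ_0), L_n → −a·Σ_{ℓ=1}^i z_ℓ + b·z_1 as n → ∞. -/

import Mathlib

open Filter Finset

lemma log_slope_lim : Tendsto (fun x : ℝ => Real.log (1 + x) / x) (nhdsWithin (0:ℝ) {(0:ℝ)}ᶜ)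
    (nhds 1) := by
  have h := Real.hasDerivAt_log one_ne_zero
  rw [hasDerivAt_iff_tendsto_slope] at h
  have h2 : Tendsto (fun x : ℝ => 1 + x) (nhdsWithin (0:ℝ) {(0:ℝ)}ᶜ)
      (nhdsWithin (1:ℝ) {(1:ℝ)}ᶜ) := by
    rw [tendsto_nhdsWithin_iff]
    constructor
    · have : Tendsto (fun x : ℝ => 1 + x) (nhds 0) (nhds (1 + 0)) :=
        (continuous_const.add continuous_id).tendsto 0
      simpa using this.mono_left nhdsWithin_le_nhds
    · filter_upwards [eventually_mem_nhdsWithin] with x hx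
      simp only [Set.mem_compl_iff, Set.mem_singleton_iff] at hx ⊢
      intro hcon
      exact hx (by linarith)
  have h3 := h.comp h2
  simp only [inv_one] at h3
  refine h3.congr (fun x => ?_)
  simp only [Function.comp, slope, vsub_eq_sub, Real.log_one, add_sub_cancel_left, sub_zero,
    smul_eq_mul]
  ring

lemma aux_mul_log (u c : ℕ → ℝ) (t : ℝ) (ht : t ≠ 0)
    (hu : Tendsto u atTop atTop) (hc : Tendsto c atTop (nhds t)) :
    Tendsto (fun n => u n * Real.log (1 + c n / u n)) atTop (nhds t) := by
  have hd : Tendsto (fun n => c n / u n) atTop (nhds 0) := hc.div_atTop hu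
  have hcne : ∀ᶠ n in atTop, c n ≠ 0 := hc.eventually (eventually_ne_nhds ht)
  have hune : ∀ᶠ n in atTop, u n ≠ 0 := hu.eventually_ne_atTop 0
  have hd' : Tendsto (fun n => c n / u n) atTop (nhdsWithin (0:ℝ) {(0:ℝ)}ᶜ) := by
    rw [tendsto_nhdsWithin_iff]
    refine ⟨hd, ?_⟩
    filter_upwards [hcne, hune] with n h1 h2
    simp [div_ne_zero h1 h2]
  have key : Tendsto (fun n => c n * (Real.log (1 + c n / u n) / (c n / u n))) atTop
      (nhds (t * 1)) := hc.mul (log_slope_lim.comp hd')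
  rw [mul_one] at key
  refine key.congr' ?_
  filter_upwards [hcne, hune] with n h1 h2
  field_simp

lemma card_div_lim (ℓ : ℕ) :
    Tendsto (fun n : ℕ => ((Icc ℓ n).card : ℝ) / n) atTop (nhds 1) := by
  have h : Tendsto (fun n : ℕ => 1 + (1 - (ℓ:ℝ)) / n) atTop (nhds (1 + 0)) :=
    tendsto_const_nhds.add (tendsto_const_nhds.div_atTop tendsto_natCast_atTop_atTop)
  rw [add_zero] at h
  refine h.congr' ?_
  filter_upwards [eventually_ge_atTop (max 1 ℓ)] with n hn
  have h1 : (1:ℕ) ≤ n := le_trans (le_max_left _ _) hn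
  have h2 : ℓ ≤ n := le_trans (le_max_right _ _) hn
  rw [Nat.card_Icc]
  have : ((n + 1 - ℓ : ℕ) : ℝ) = (n : ℝ) + 1 - ℓ := by
    rw [Nat.cast_sub (by omega)]; push_cast; ring
  rw [this]
  have hn0 : (n:ℝ) ≠ 0 := by positivity
  field_simp
  ring

lemma rpow_three_halves (n : ℕ) (hn : 1 ≤ n) :
    (n : ℝ) ^ ((3:ℝ)/2) = n * Real.sqrt n := by
  have hn0 : (0:ℝ) < n := by exact_mod_cast hn
  rw [Real.sqrt_eq_rpow, show (3:ℝ)/2 = 1 + 1/2 by norm_num,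
    Real.rpow_add hn0, Real.rpow_one]

lemma limA (a : ℝ) (ha : a ≠ 0) (ℓ : ℕ) :
    Tendsto (fun n : ℕ => Real.sqrt n * ((Icc ℓ n).card : ℝ) *
      Real.log (1 - a / (n:ℝ) ^ ((3:ℝ)/2))) atTop (nhds (-a)) := by
  have hu : Tendsto (fun n : ℕ => (n:ℝ) ^ ((3:ℝ)/2)) atTop atTop :=
    (tendsto_rpow_atTop (by norm_num)).comp tendsto_natCast_atTop_atTop
  have h1 := aux_mul_log (fun n : ℕ => (n:ℝ) ^ ((3:ℝ)/2)) (fun _ => -a) (-a)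
    (neg_ne_zero.2 ha) hu tendsto_const_nhds
  have h2 := (card_div_lim ℓ).mul h1
  rw [one_mul] at h2
  refine h2.congr' ?_
  filter_upwards [eventually_ge_atTop 1] with n hn
  have hns := rpow_three_halves n hn
  have hn0 : (n:ℝ) ≠ 0 := by
    have : (0:ℝ) < n := by exact_mod_cast hn
    positivity
  have hlog : 1 + -a / (n:ℝ) ^ ((3:ℝ)/2) = 1 - a / (n:ℝ) ^ ((3:ℝ)/2) := by ring
  rw [hlog, hns]
  field_simp

lemma limB (a b : ℝ) (hb : b ≠ 0) :
    Tendsto (fun n : ℕ => Real.sqrt n *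
      Real.log (1 - a / (n:ℝ) ^ ((3:ℝ)/2) + b / Real.sqrt n)) atTop (nhds b) := by
  have hu : Tendsto (fun n : ℕ => Real.sqrt n) atTop atTop := by
    have := (tendsto_rpow_atTop (by norm_num : (0:ℝ) < 1/2)).comp
      (tendsto_natCast_atTop_atTop (R := ℝ))
    refine this.congr (fun n => ?_)
    simp [Real.sqrt_eq_rpow]
  have hc : Tendsto (fun n : ℕ => b - a / n) atTop (nhds b) := by
    have : Tendsto (fun n : ℕ => b - a / n) atTop (nhds (b - 0)) :=
      tendsto_const_nhds.sub (tendsto_const_nhds.div_atTop tendsto_natCast_atTop_atTop)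
    simpa using this
  have h := aux_mul_log _ _ b hb hu hc
  refine h.congr' ?_
  filter_upwards [eventually_ge_atTop 1] with n hn
  have hns := rpow_three_halves n hn
  have hn0 : (0:ℝ) < n := by exact_mod_cast hn
  have hs0 : Real.sqrt n ≠ 0 := by positivity
  rw [hns]
  congr 1
  rw [sub_div, div_div]
  ring

lemma inner_lim (a b : ℝ) (ha : a ≠ 0) (hb : b ≠ 0) (ℓ : ℕ) (hℓ : 1 ≤ ℓ) :
    Tendsto (fun n : ℕ => Real.sqrt n * ∑ j ∈ Icc ℓ n, Real.log
      (1 - a / (n:ℝ) ^ ((3:ℝ)/2) + if j = 1 then b / Real.sqrt n else 0)) atTop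
      (nhds (-a + if ℓ = 1 then b else 0)) := by
  rcases eq_or_lt_of_le hℓ with h1 | h2
  · -- ℓ = 1
    subst h1
    simp only [if_pos rfl]
    have h := (limB a b hb).add (limA a ha 2)
    rw [show b + -a = -a + b by ring] at h
    refine h.congr' ?_
    filter_upwards [eventually_ge_atTop 1] with n hn
    have hsplit : Icc 1 n = insert 1 (Icc 2 n) := by
      ext j; simp only [mem_insert, mem_Icc]; omega
    rw [hsplit, Finset.sum_insert (by simp)]
    have hrest : ∑ j ∈ Icc 2 n, Real.log
        (1 - a / (n:ℝ) ^ ((3:ℝ)/2) + if j = 1 then b / Real.sqrt n else 0)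
        = ((Icc 2 n).card : ℝ) * Real.log (1 - a / (n:ℝ) ^ ((3:ℝ)/2)) := by
      rw [Finset.sum_congr rfl (fun j hj => ?_), Finset.sum_const, nsmul_eq_mul]
      have : j ≠ 1 := by simp only [mem_Icc] at hj; omega
      simp [this]
    rw [hrest, if_pos rfl]
    ring
  · -- ℓ ≥ 2
    have hne : ℓ ≠ 1 := by omega
    simp only [if_neg hne, add_zero]
    refine (limA a ha ℓ).congr' ?_
    filter_upwards [eventually_ge_atTop 1] with n hn
    have hrest : ∑ j ∈ Icc ℓ n, Real.log
        (1 - a / (n:ℝ) ^ ((3:ℝ)/2) + if j = 1 then b / Real.sqrt n else 0)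
        = ((Icc ℓ n).card : ℝ) * Real.log (1 - a / (n:ℝ) ^ ((3:ℝ)/2)) := by
      rw [Finset.sum_congr rfl (fun j hj => ?_), Finset.sum_const, nsmul_eq_mul]
      have : j ≠ 1 := by simp only [mem_Icc] at hj; omega
      simp [this]
    rw [mul_assoc, ← hrest]

/-- Limit of the log tail probabilities of the stationary gap distribution:
if `z^{(n)}_ℓ → z_ℓ` with `√n · z^{(n)}_ℓ ∈ ℕ₀`, then
`Σ_{ℓ=1}^i √n z^{(n)}_ℓ Σ_{j=ℓ}^n log(1 − a n^{−3/2} + b n^{−1/2} 1_{j=1})`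
converges to `−a Σ_{ℓ=1}^i z_ℓ + b z_1`. -/
theorem log_tail_limit
    (a b : ℝ) (hb : 0 < b) (hab : b < a) (i : ℕ) (hi : 1 ≤ i)
    (z : ℕ → ℝ) (hz : ∀ ℓ ∈ Icc 1 i, 0 ≤ z ℓ)
    (zn : ℕ → ℕ → ℝ)
    (hlattice : ∀ n ℓ, ℓ ∈ Icc 1 i → ∃ m : ℕ, zn n ℓ = (m : ℝ) / Real.sqrt n)
    (happrox : ∀ ℓ ∈ Icc 1 i, Tendsto (fun n => zn n ℓ) atTop (nhds (z ℓ))) :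
    Tendsto
      (fun n : ℕ => ∑ ℓ ∈ Icc 1 i, Real.sqrt n * zn n ℓ *
        ∑ j ∈ Icc ℓ n, Real.log
          (1 - a / (n : ℝ) ^ ((3 : ℝ) / 2) + if j = 1 then b / Real.sqrt n else 0))
      atTop
      (nhds (-a * ∑ ℓ ∈ Icc 1 i, z ℓ + b * z 1)) := by
  have ha : a ≠ 0 := by linarith
  have hb0 : b ≠ 0 := ne_of_gt hb
  have hsum : Tendsto
      (fun n : ℕ => ∑ ℓ ∈ Icc 1 i, Real.sqrt n * zn n ℓ *
        ∑ j ∈ Icc ℓ n, Real.log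
          (1 - a / (n : ℝ) ^ ((3 : ℝ) / 2) + if j = 1 then b / Real.sqrt n else 0))
      atTop (nhds (∑ ℓ ∈ Icc 1 i, z ℓ * (-a + if ℓ = 1 then b else 0))) := by
    refine tendsto_finset_sum _ (fun ℓ hℓ => ?_)
    have hℓ1 : 1 ≤ ℓ := (mem_Icc.1 hℓ).1
    have h := (happrox ℓ hℓ).mul (inner_lim a b ha hb0 ℓ hℓ1)
    refine h.congr (fun n => ?_)
    ring
  have heq : ∑ ℓ ∈ Icc 1 i, z ℓ * (-a + if ℓ = 1 then b else 0)
      = -a * ∑ ℓ ∈ Icc 1 i, z ℓ + b * z 1 := by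
    simp_rw [mul_add, Finset.sum_add_distrib, mul_ite, mul_zero]
    rw [Finset.sum_ite_eq' (Icc 1 i) 1 (fun ℓ => z ℓ * b),
      if_pos (by simp [hi] : (1:ℕ) ∈ Icc 1 i), ← Finset.sum_mul]
    ring
  rwa [heq] at hsum
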